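/- Let Σ be a 3×3 real symmetric positive definite matrix, μ ∈ ℝ³, and κ > 0 with c² > κ, where c := √(μᵀΣ⁻¹μ). Then every element e of the boundary set E satisfies eᵀΣ⁻¹e = eᵀΣ⁻¹μ = c² − κ. -/

import Mathlib

open Matrix

/-- Assuming `c² > κ`, every element `e` of the boundary set
`E = { τ(x)x : x ≠ 0, D_ray(x; μ, Σ) = κ }` satisfies
`eᵀΣ⁻¹e = eᵀΣ⁻¹μ = c² − κ`. -/
theorem stmt_5 (Cov : Matrix (Fin 3) (Fin 3) ℝ) (hCov : Cov.PosDef)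
    (μ : Fin 3 → ℝ) (κ : ℝ) (hκ : 0 < κ)
    (hc : Real.sqrt (μ ⬝ᵥ Cov⁻¹.mulVec μ) ^ 2 > κ) :
    let τ : (Fin 3 → ℝ) → ℝ := fun x => (x ⬝ᵥ Cov⁻¹.mulVec μ) / (x ⬝ᵥ Cov⁻¹.mulVec x)
    let Dray : (Fin 3 → ℝ) → ℝ := fun x => (τ x • x - μ) ⬝ᵥ Cov⁻¹.mulVec (τ x • x - μ)
    let E : Set (Fin 3 → ℝ) := {p | ∃ x : Fin 3 → ℝ, x ≠ 0 ∧ Dray x = κ ∧ p = τ x • x}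
    ∀ e ∈ E,
      e ⬝ᵥ Cov⁻¹.mulVec e = e ⬝ᵥ Cov⁻¹.mulVec μ ∧
      e ⬝ᵥ Cov⁻¹.mulVec μ = Real.sqrt (μ ⬝ᵥ Cov⁻¹.mulVec μ) ^ 2 - κ := by
  intro τ Dray E e he
  obtain ⟨x, hx, hD, rfl⟩ := he
  have hAinv : (Cov⁻¹).PosDef := hCov.inv
  have hxx : 0 < x ⬝ᵥ Cov⁻¹.mulVec x := by
    have := hAinv.dotProduct_mulVec_pos hx
    simpa using this
  have ha : x ⬝ᵥ Cov⁻¹.mulVec x ≠ 0 := ne_of_gt hxx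
  have hmm : 0 ≤ μ ⬝ᵥ Cov⁻¹.mulVec μ := by
    have := hAinv.posSemidef.dotProduct_mulVec_nonneg μ
    simpa using this
  have hsq : Real.sqrt (μ ⬝ᵥ Cov⁻¹.mulVec μ) ^ 2 = μ ⬝ᵥ Cov⁻¹.mulVec μ :=
    Real.sq_sqrt hmm
  have hT : Cov⁻¹ᵀ = Cov⁻¹ := by
    rw [← conjTranspose_eq_transpose_of_trivial, hAinv.isHermitian.eq]
  have hsym : μ ⬝ᵥ Cov⁻¹.mulVec x = x ⬝ᵥ Cov⁻¹.mulVec μ := by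
    rw [dotProduct_mulVec, ← mulVec_transpose, hT, dotProduct_comm]
  set a := x ⬝ᵥ Cov⁻¹.mulVec x with ha_def
  set b := x ⬝ᵥ Cov⁻¹.mulVec μ with hb_def
  set m := μ ⬝ᵥ Cov⁻¹.mulVec μ with hm_def
  have hτ : τ x = b / a := rfl
  have key : Dray x = m - b ^ 2 / a := by
    simp only [Dray, τ, mulVec_sub, mulVec_smul, dotProduct_sub, sub_dotProduct,
      smul_dotProduct, dotProduct_smul, smul_eq_mul, hsym]
    rw [← ha_def, ← hb_def, ← hm_def]
    field_simp
    ring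
  rw [key] at hD
  have hbm : b ^ 2 / a = m - κ := by linarith
  constructor
  · simp only [τ, mulVec_smul, dotProduct_smul, smul_dotProduct, smul_eq_mul,
      ← ha_def, ← hb_def]
    field_simp
  · simp only [τ, smul_dotProduct, smul_eq_mul, ← hb_def, hsq, ← hm_def]
    rw [div_mul_eq_mul_div, ← sq, hbm]
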